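/- Fix a finite index set ι and for each i ∈ ι a finite nonempty type α i, and consider SPNs over ι as defined inductively (Leaf, Sum with convex weights, Prod over disjoint scopes), with pd defined recursively by pd(Leaf i p) = max_{v : α i} p v, pd(Sum node) = max_j w_j · pd(S_j), pd(Prod node) = Π_j pd(S_j), and with D(S) the product, over all Sum nodes occurring in S, of the number of children of that node. Then for every SPN S, pd(S) · D(S) ≥ max over configurations x : ∀ i, α i of S(x). -/
import Mathlib


open scoped NNReal

/-- Sum-product networks over index set `ι` with variable domains `α i`, indexed by scope. -/
inductive SPN (ι : Type) (α : ι → Type) : Set ι → Type where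
  | leaf (i : ι) (p : α i → ℝ≥0) : SPN ι α {i}
  | sum {sc : Set ι} (t : ℕ) (ht : 1 ≤ t) (child : Fin t → SPN ι α sc)
      (w : Fin t → ℝ≥0) (hw : ∑ j, w j = 1) : SPN ι α sc
  | prod (t : ℕ) (scs : Fin t → Set ι)
      (hd : Pairwise fun j k => Disjoint (scs j) (scs k))
      (child : ∀ j, SPN ι α (scs j)) : SPN ι α (⋃ j, scs j)

/-- The value of an SPN at a configuration. -/
noncomputable def SPN.eval {ι : Type} {α : ι → Type} :
    {sc : Set ι} → SPN ι α sc → (∀ i, α i) → ℝ≥0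
  | _, .leaf i p, x => p (x i)
  | _, .sum _ _ child w _, x => ∑ j, w j * (child j).eval x
  | _, .prod _ _ _ child, x => ∏ j, (child j).eval x

/-- The upward pass of the max-product algorithm. -/
noncomputable def SPN.pd {ι : Type} {α : ι → Type} :
    {sc : Set ι} → SPN ι α sc → ℝ≥0
  | _, .leaf _ p => ⨆ v, p v
  | _, .sum _ _ child w _ => ⨆ j, w j * (child j).pd
  | _, .prod _ _ _ child => ∏ j, (child j).pd

/-- The product over all sum nodes of the number of their children. -/
def SPN.D {ι : Type} {α : ι → Type} :
    {sc : Set ι} → SPN ι α sc → ℕ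
  | _, .leaf _ _ => 1
  | _, .sum t _ child _ _ => t * ∏ j, (child j).D
  | _, .prod _ _ _ child => ∏ j, (child j).D


lemma SPN.one_le_D {ι : Type} {α : ι → Type} :
    ∀ {sc : Set ι} (S : SPN ι α sc), 1 ≤ S.D := by
  intro sc S
  induction S with
  | leaf i p => simp [SPN.D]
  | sum t ht child w hw ih =>
      simp only [SPN.D]
      calc 1 = 1 * 1 := (one_mul 1).symm
      _ ≤ t * ∏ j, (child j).D :=
        Nat.mul_le_mul ht (Finset.one_le_prod' fun j _ => ih j)
  | prod t scs hd child ih =>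
      exact Finset.one_le_prod' fun j _ => ih j

lemma SPN.eval_le {ι : Type} {α : ι → Type} [∀ i, Fintype (α i)] :
    ∀ {sc : Set ι} (S : SPN ι α sc) (x : ∀ i, α i),
      S.eval x ≤ S.pd * (S.D : ℝ≥0) := by
  intro sc S
  induction S with
  | leaf i p =>
      intro x
      simp only [SPN.eval, SPN.pd, SPN.D, Nat.cast_one, mul_one]
      exact le_ciSup (Set.Finite.bddAbove (Set.finite_range p)) (x i)
  | sum t ht child w hw ih =>
      intro x
      simp only [SPN.eval, SPN.pd, SPN.D]
      have hD : ∀ j, ((child j).D : ℝ≥0) ≤ ((∏ k, (child k).D : ℕ) : ℝ≥0) := by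
        intro j
        exact_mod_cast
          Finset.single_le_prod' (fun k _ => SPN.one_le_D (child k)) (Finset.mem_univ j)
      calc ∑ j, w j * (child j).eval x
          ≤ ∑ _j : Fin t, (⨆ k, w k * (child k).pd) * ((∏ k, (child k).D : ℕ) : ℝ≥0) := by
            apply Finset.sum_le_sum
            intro j _
            calc w j * (child j).eval x
                ≤ w j * ((child j).pd * (child j).D) := mul_le_mul_right (ih j x) _
              _ = (w j * (child j).pd) * (child j).D := (mul_assoc _ _ _).symm
              _ ≤ (⨆ k, w k * (child k).pd) * ((∏ k, (child k).D : ℕ) : ℝ≥0) :=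
                  mul_le_mul'
                    (le_ciSup (f := fun k => w k * (child k).pd) (Set.Finite.bddAbove (Set.finite_range _)) j) (hD j)
        _ = (⨆ k, w k * (child k).pd) * ((t * ∏ k, (child k).D : ℕ) : ℝ≥0) := by
            simp [Finset.sum_const, Nat.cast_mul, mul_comm, mul_assoc, mul_left_comm]
  | prod t scs hd child ih =>
      intro x
      simp only [SPN.eval, SPN.pd, SPN.D, Nat.cast_prod]
      calc ∏ j, (child j).eval x
          ≤ ∏ j, (child j).pd * ((child j).D : ℝ≥0) :=
            Finset.prod_le_prod' fun j _ => ih j x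
        _ = (∏ j, (child j).pd) * ∏ j, ((child j).D : ℝ≥0) := Finset.prod_mul_distrib

/-- For every SPN `S`, `pd(S) · D(S) ≥ max_x S(x)`. -/
theorem stmt12 {ι : Type} [Fintype ι] [DecidableEq ι] {α : ι → Type}
    [∀ i, Fintype (α i)] [∀ i, Nonempty (α i)]
    {sc : Set ι} (S : SPN ι α sc) :
    (⨆ x : ∀ i, α i, S.eval x) ≤ S.pd * (S.D : ℝ≥0) := by
  exact ciSup_le fun x => SPN.eval_le S x
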